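/- Let f be analytic in the region bounded by the Bernstein ellipse E_ρ = {z = (ρe^{iθ} + ρ^{-1}e^{-iθ})/2 : θ ∈ [0,2π)} for some ρ > 1, with |f(z)| ≤ M on E_ρ. Then the degree-n Chebyshev truncation p_n of f satisfies max_{x∈[−1,1]} |p_n(x) − f(x)| ≤ 2M ρ^{−n}/(ρ − 1). -/

import Mathlib

open MeasureTheory Complex Metric intervalIntegral Real

/-- The Bernstein ellipse `E_ρ = {(ρe^{iθ} + ρ^{−1}e^{−iθ})/2 : θ}` in the complex plane. -/
def bernsteinEllipse (ρ : ℝ) : Set ℂ :=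
  {z | ∃ θ : ℝ, z = ((ρ : ℂ) * Complex.exp ((θ : ℂ) * Complex.I) +
    (ρ : ℂ)⁻¹ * Complex.exp (-((θ : ℂ) * Complex.I))) / 2}

/-- The closed region bounded by the Bernstein ellipse `E_ρ`. -/
def bernsteinRegion (ρ : ℝ) : Set ℂ :=
  {z | ∃ r θ : ℝ, r ∈ Set.Icc 1 ρ ∧ z = ((r : ℂ) * Complex.exp ((θ : ℂ) * Complex.I) +
    (r : ℂ)⁻¹ * Complex.exp (-((θ : ℂ) * Complex.I))) / 2}

section Aux

noncomputable def jouk (w : ℂ) : ℂ := (w + w⁻¹) / 2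

-- exp integral helper
lemma int_exp (m : ℤ) : (∫ θ : ℝ in (0:ℝ)..(2*π), Complex.exp (m * θ * Complex.I))
    = if m = 0 then (2*π : ℝ) else 0 := by
  rcases eq_or_ne m 0 with h | h
  · simp [h]
  · have hc : (m : ℂ) * Complex.I ≠ 0 := by
      simp [Complex.I_ne_zero, h]
    have : ∀ θ : ℝ, (m:ℂ) * θ * Complex.I = ((m:ℂ) * Complex.I) * θ := by intro θ; ring
    simp only [this]
    rw [integral_exp_mul_complex hc, if_neg h]
    have h2 : ((m:ℂ) * Complex.I) * (2*π:ℝ) = m * (2*π*Complex.I) := by push_cast; ring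
    rw [h2, Complex.exp_int_mul_two_pi_mul_I]
    simp

lemma jouk_circleMap {r : ℝ} (hr : r ≠ 0) (θ : ℝ) :
    jouk (circleMap 0 r θ) = ((r : ℂ) * Complex.exp ((θ : ℂ) * Complex.I) +
      (r : ℂ)⁻¹ * Complex.exp (-((θ : ℂ) * Complex.I))) / 2 := by
  have hrc : (r : ℂ) ≠ 0 := by exact_mod_cast hr
  simp only [jouk, circleMap, zero_add, mul_inv, ← Complex.exp_neg]

lemma jouk_mem_region {ρ : ℝ} {w : ℂ} (hw : w ∈ closedBall (0:ℂ) ρ \ ball (0:ℂ) 1) :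
    jouk w ∈ bernsteinRegion ρ := by
  obtain ⟨h1, h2⟩ := hw
  simp only [mem_closedBall, mem_ball, dist_zero_right, not_lt] at h1 h2
  refine ⟨‖w‖, Complex.arg w, ⟨by simpa using h2, by simpa using h1⟩, ?_⟩
  have := Complex.norm_mul_exp_arg_mul_I w
  rw [show ((‖w‖ : ℝ) : ℂ) * Complex.exp ((Complex.arg w : ℂ) * Complex.I) = w from this]
  have hw0 : w ≠ 0 := by
    intro h; rw [h] at h2; simp at h2; linarith
  have : ((‖w‖ : ℝ) : ℂ)⁻¹ * Complex.exp (-((Complex.arg w : ℂ) * Complex.I)) = w⁻¹ := by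
    rw [Complex.exp_neg, ← mul_inv, this]
  rw [this]; rfl

lemma jouk_mem_ellipse {ρ : ℝ} {w : ℂ} (hρ : 0 < ρ) (hw : ‖w‖ = ρ) :
    jouk w ∈ bernsteinEllipse ρ := by
  refine ⟨Complex.arg w, ?_⟩
  have h := Complex.norm_mul_exp_arg_mul_I w
  rw [hw] at h
  have hw0 : w ≠ 0 := by
    intro hh; rw [hh] at hw; simp at hw; linarith
  rw [show ((ρ : ℝ) : ℂ) * Complex.exp ((Complex.arg w : ℂ) * Complex.I) = w from h]
  have : ((ρ : ℝ) : ℂ)⁻¹ * Complex.exp (-((Complex.arg w : ℂ) * Complex.I)) = w⁻¹ := by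
    rw [Complex.exp_neg, ← mul_inv, h]
  rw [this]; rfl

lemma jouk_hasDerivAt {w : ℂ} (hw : w ≠ 0) :
    HasDerivAt jouk ((1 + -(w^2)⁻¹)/2) w :=
  ((hasDerivAt_id w).add (hasDerivAt_inv hw)).div_const 2

lemma jouk_analyticAt {w : ℂ} (hw : w ≠ 0) : AnalyticAt ℂ jouk w := by
  unfold jouk
  exact ((analyticAt_id.add (analyticAt_inv hw)).div analyticAt_const (by norm_num))

lemma region_mem_nhds {ρ : ℝ} {w : ℂ} (h1 : 1 < ‖w‖) (h2 : ‖w‖ < ρ) :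
    bernsteinRegion ρ ∈ nhds (jouk w) := by
  have hw0 : w ≠ 0 := by
    intro h; rw [h] at h1; simp at h1; linarith
  have hnc : ¬ ∀ᶠ z in nhds w, jouk z = jouk w := by
    intro hc
    have hd0 : deriv jouk w = 0 := by
      have : jouk =ᶠ[nhds w] fun _ => jouk w := hc
      rw [this.deriv_eq]; simp
    have := (jouk_hasDerivAt hw0).deriv
    rw [hd0] at this
    have hw2 : ‖w^2‖ > 1 := by
      rw [norm_pow]; nlinarith
    have hsq : w^2 = 1 := by
      field_simp at this
      linear_combination -this
    rw [hsq] at hw2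
    simp at hw2
  have := (jouk_analyticAt hw0).eventually_constant_or_nhds_le_map_nhds_aux.resolve_left hnc
  apply this
  rw [Filter.mem_map]
  have hU : {z : ℂ | 1 < ‖z‖ ∧ ‖z‖ < ρ} ∈ nhds w := by
    have : IsOpen {z : ℂ | 1 < ‖z‖ ∧ ‖z‖ < ρ} := by
      apply IsOpen.inter
      · exact isOpen_lt continuous_const continuous_norm
      · exact isOpen_lt continuous_norm continuous_const
    exact this.mem_nhds ⟨h1, h2⟩
  apply Filter.mem_of_superset hU
  intro z hz
  exact jouk_mem_region ⟨by simp [le_of_lt hz.2], by simp [hz.1]; linarith [hz.1]⟩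

lemma T_abs_le {x : ℝ} (hx : x ∈ Set.Icc (-1:ℝ) 1) (k : ℕ) :
    |(Polynomial.Chebyshev.T ℝ (k : ℤ)).eval x| ≤ 1 := by
  have h1 : x = Real.cos (Real.arccos x) := (Real.cos_arccos hx.1 hx.2).symm
  rw [h1, Polynomial.Chebyshev.T_real_cos]
  exact Real.abs_cos_le_one _

lemma cos_expand (z : ℂ) :
    Complex.cos z = (Complex.exp (z * Complex.I) + Complex.exp (-z * Complex.I)) / 2 := rfl

set_option maxHeartbeats 400000 in
lemma coeff_bound (ρ M : ℝ) (hρ : 1 < ρ) (f : ℂ → ℂ) (a : ℕ → ℝ)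
    (hf : DifferentiableOn ℂ f (bernsteinRegion ρ))
    (hM : ∀ z ∈ bernsteinEllipse ρ, ‖f z‖ ≤ M)
    (hexp : ∀ x ∈ Set.Icc (-1 : ℝ) 1,
      HasSum (fun j : ℕ => ((a j * (Polynomial.Chebyshev.T ℝ (j : ℤ)).eval x : ℝ) : ℂ)) (f x))
    (j : ℕ) (hj : 1 ≤ j) : |a j| ≤ 2 * M * ρ⁻¹ ^ j := by
  have hρ0 : (0:ℝ) < ρ := by linarith
  have hS : Summable fun k => |a k| := by
    have h1 := hexp 1 (Set.mem_Icc.mpr ⟨by norm_num, le_refl 1⟩)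
    have e1 : ∀ k : ℕ, (Polynomial.Chebyshev.T ℝ (k : ℤ)).eval (1:ℝ) = 1 := by
      intro k
      have h0 := Polynomial.Chebyshev.T_real_cos 0 (k : ℤ)
      simpa using h0
    simp only [e1, mul_one] at h1
    have h2 : Summable fun k => ((a k : ℂ)) := h1.summable
    have h3 := summable_norm_iff.mpr h2
    simpa using h3
  set E : ℝ → ℂ := fun θ => Complex.exp ((((-((j:ℝ) * θ)) : ℝ) : ℂ) * Complex.I) with hE
  set G : ℕ → ℝ → ℂ := fun k θ => ((a k * Real.cos (k * θ) : ℝ) : ℂ) * E θ with hGdef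
  set F : ℝ → ℂ := fun θ => f ((Real.cos θ : ℝ) : ℂ) * E θ with hF
  have habsE : ∀ θ : ℝ, ‖E θ‖ = 1 := by
    intro θ
    rw [hE]
    exact Complex.norm_exp_ofReal_mul_I _
  have hG : ∀ θ : ℝ, HasSum (fun k => G k θ) (F θ) := by
    intro θ
    have hc := hexp (Real.cos θ)
      (Set.mem_Icc.mpr ⟨Real.neg_one_le_cos θ, Real.cos_le_one θ⟩)
    have h4 := hc.mul_right (E θ)
    have h5 : (fun k : ℕ => ((a k * (Polynomial.Chebyshev.T ℝ (k : ℤ)).eval (Real.cos θ) : ℝ) : ℂ) * E θ)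
        = fun k => G k θ := by
      funext k
      rw [hGdef, Polynomial.Chebyshev.T_real_cos]
      norm_num
    rwa [h5] at h4
  have hint : HasSum (fun k => ∫ θ in (0:ℝ)..(2*π), G k θ) (∫ θ in (0:ℝ)..(2*π), F θ) := by
    apply intervalIntegral.hasSum_integral_of_dominated_convergence (fun k _ => |a k|)
    · intro k
      apply Continuous.aestronglyMeasurable
      rw [hGdef]
      apply Continuous.mul _ (by fun_prop)
      exact Complex.continuous_ofReal.comp (by fun_prop)
    · intro k
      filter_upwards with θ _
      have hab : ‖G k θ‖ = |a k * Real.cos (k*θ)| := by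
        rw [hGdef]
        simp only [norm_mul, habsE θ, mul_one]
        rw [Complex.norm_real, Real.norm_eq_abs]
      rw [hab, abs_mul]
      calc |a k| * |Real.cos (k*θ)| ≤ |a k| * 1 :=
            mul_le_mul_of_nonneg_left (Real.abs_cos_le_one _) (abs_nonneg _)
        _ = |a k| := mul_one _
    · filter_upwards with θ _; exact hS
    · exact intervalIntegrable_const
    · filter_upwards with θ _; exact hG θ
  have hGi : ∀ k : ℕ, (∫ θ in (0:ℝ)..(2*π), G k θ)
      = if k = j then ((π * a j : ℝ) : ℂ) else 0 := by
    intro k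
    have e1 : ∀ θ : ℝ, Complex.exp ((((k:ℝ)*θ : ℝ) : ℂ) * Complex.I) * E θ
        = Complex.exp ((((k:ℤ)-(j:ℤ) : ℤ) : ℂ) * θ * Complex.I) := by
      intro θ; rw [hE, ← Complex.exp_add]; congr 1; push_cast; ring
    have e2 : ∀ θ : ℝ, Complex.exp (-(((k:ℝ)*θ : ℝ) : ℂ) * Complex.I) * E θ
        = Complex.exp (((-(k:ℤ)-(j:ℤ) : ℤ) : ℂ) * θ * Complex.I) := by
      intro θ; rw [hE, ← Complex.exp_add]; congr 1; push_cast; ring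
    have key : ∀ θ : ℝ, G k θ = ((a k : ℝ) : ℂ) *
        ((Complex.exp ((((k:ℤ)-(j:ℤ) : ℤ) : ℂ) * θ * Complex.I)
          + Complex.exp (((-(k:ℤ)-(j:ℤ) : ℤ) : ℂ) * θ * Complex.I)) / 2) := by
      intro θ
      rw [← e1, ← e2]
      rw [hGdef]
      dsimp only
      rw [Complex.ofReal_mul, Complex.ofReal_cos, cos_expand]
      push_cast
      ring
    have hi1 : IntervalIntegrable
        (fun θ : ℝ => Complex.exp ((((k:ℤ)-(j:ℤ) : ℤ) : ℂ) * θ * Complex.I))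
        MeasureTheory.volume 0 (2*π) := (Continuous.intervalIntegrable (by fun_prop) _ _)
    have hi2 : IntervalIntegrable
        (fun θ : ℝ => Complex.exp (((-(k:ℤ)-(j:ℤ) : ℤ) : ℂ) * θ * Complex.I))
        MeasureTheory.volume 0 (2*π) := (Continuous.intervalIntegrable (by fun_prop) _ _)
    have h6 : (∫ θ in (0:ℝ)..(2*π), G k θ) = ((a k : ℝ) : ℂ) *
        (((∫ θ in (0:ℝ)..(2*π), Complex.exp ((((k:ℤ)-(j:ℤ) : ℤ) : ℂ) * θ * Complex.I)) +
          (∫ θ in (0:ℝ)..(2*π), Complex.exp (((-(k:ℤ)-(j:ℤ) : ℤ) : ℂ) * θ * Complex.I))) / 2) := by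
      simp_rw [key]
      rw [intervalIntegral.integral_const_mul]
      congr 1
      rw [intervalIntegral.integral_div, intervalIntegral.integral_add hi1 hi2]
    rw [h6, int_exp, int_exp]
    rcases eq_or_ne k j with rfl | hkj
    · rw [if_pos rfl, if_pos (by omega : (k:ℤ) - (k:ℤ) = 0), if_neg (by omega : ¬(-(k:ℤ) - (k:ℤ) = 0))]
      push_cast
      ring
    · rw [if_neg hkj, if_neg (by omega : ¬((k:ℤ) - (j:ℤ) = 0)), if_neg (by omega : ¬(-(k:ℤ) - (j:ℤ) = 0))]
      simp
  have hFval : (∫ θ in (0:ℝ)..(2*π), F θ) = ((π * a j : ℝ) : ℂ) := by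
    have h7 : (fun k : ℕ => ∫ θ in (0:ℝ)..(2*π), G k θ)
        = fun k => if k = j then ((π * a j : ℝ) : ℂ) else 0 := funext hGi
    rw [h7] at hint
    exact hint.unique (hasSum_ite_eq j _)
  -- circle integral at radius 1
  have hcirc1 : (∮ z in C((0:ℂ), 1), f (jouk z) * z ^ (-(j:ℤ)-1))
      = Complex.I * ((π * a j : ℝ) : ℂ) := by
    have hpt : ∀ θ : ℝ, deriv (circleMap 0 1) θ •
        (f (jouk (circleMap 0 1 θ)) * (circleMap 0 1 θ) ^ (-(j:ℤ)-1))
        = Complex.I * F θ := by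
      intro θ
      have hc1 : circleMap 0 1 θ = Complex.exp ((θ:ℂ) * Complex.I) := by
        rw [circleMap_zero]; norm_num
      rw [deriv_circleMap, smul_eq_mul, hc1]
      have hj1 : jouk (Complex.exp ((θ:ℂ) * Complex.I)) = ((Real.cos θ : ℝ) : ℂ) := by
        rw [jouk, ← Complex.exp_neg, Complex.ofReal_cos, cos_expand, neg_mul]
      have hz : Complex.exp ((θ:ℂ) * Complex.I) ^ (-(j:ℤ)-1)
          = Complex.exp (((-(j:ℤ)-1 : ℤ) : ℂ) * ((θ:ℂ) * Complex.I)) :=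
        (Complex.exp_int_mul _ _).symm
      rw [hj1, hz, hF]
      dsimp only
      have hcomb : Complex.exp ((θ:ℂ) * Complex.I) *
          Complex.exp (((-(j:ℤ)-1 : ℤ) : ℂ) * ((θ:ℂ) * Complex.I)) = E θ := by
        rw [hE, ← Complex.exp_add]; congr 1; push_cast; ring
      calc Complex.exp ((θ:ℂ) * Complex.I) * Complex.I *
            (f ((Real.cos θ : ℝ) : ℂ) * Complex.exp (((-(j:ℤ)-1 : ℤ) : ℂ) * ((θ:ℂ) * Complex.I)))
          = Complex.I * (f ((Real.cos θ : ℝ) : ℂ) *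
            (Complex.exp ((θ:ℂ) * Complex.I) *
              Complex.exp (((-(j:ℤ)-1 : ℤ) : ℂ) * ((θ:ℂ) * Complex.I)))) := by ring
        _ = Complex.I * (f ((Real.cos θ : ℝ) : ℂ) * E θ) := by rw [hcomb]
    rw [circleIntegral]
    rw [intervalIntegral.integral_congr (g := fun θ => Complex.I * F θ)
      (fun θ _ => hpt θ)]
    rw [intervalIntegral.integral_const_mul, hFval]
  -- nonvanishing on annulus
  have hne : ∀ w : ℂ, w ∈ Metric.closedBall (0:ℂ) ρ \ Metric.ball 0 1 → w ≠ 0 := by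
    intro w hw h0
    have := hw.2
    rw [h0] at this
    exact this (Metric.mem_ball_self one_pos)
  -- continuity on closed annulus
  have hcont : ContinuousOn (fun w => f (jouk w) * w ^ (-(j:ℤ)-1))
      (Metric.closedBall (0:ℂ) ρ \ Metric.ball 0 1) := by
    have hjc : ContinuousOn jouk (Metric.closedBall (0:ℂ) ρ \ Metric.ball 0 1) := by
      intro w hw
      have : ContinuousAt jouk w := by
        unfold jouk
        exact (continuousAt_id.add (continuousAt_inv₀ (hne w hw))).div_const 2
      exact this.continuousWithinAt
    apply ContinuousOn.mul
    · exact hf.continuousOn.comp hjc (fun w hw => jouk_mem_region hw)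
    · intro w hw
      exact (continuousAt_zpow₀ _ _ (Or.inl (hne w hw))).continuousWithinAt
  -- differentiability on open annulus
  have hdiff : ∀ z ∈ (Metric.ball (0:ℂ) ρ \ Metric.closedBall 0 1) \ (∅ : Set ℂ),
      DifferentiableAt ℂ (fun w => f (jouk w) * w ^ (-(j:ℤ)-1)) z := by
    intro z hz
    obtain ⟨⟨hz1, hz2⟩, -⟩ := hz
    rw [Metric.mem_ball, dist_zero_right] at hz1
    rw [Metric.mem_closedBall, dist_zero_right, not_le] at hz2
    have hz0 : z ≠ 0 := by
      intro h; rw [h] at hz2; simp at hz2; linarith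
    have h1 : DifferentiableAt ℂ jouk z := (jouk_hasDerivAt hz0).differentiableAt
    have h2 : DifferentiableAt ℂ f (jouk z) :=
      hf.differentiableAt (region_mem_nhds hz2 hz1)
    exact (h2.comp z h1).mul (differentiableAt_zpow.mpr (Or.inl hz0))
  have heq := circleIntegral_eq_of_differentiable_on_annulus_off_countable
    (c := (0:ℂ)) zero_lt_one (le_of_lt hρ) Set.countable_empty hcont hdiff
  -- bound at radius ρ
  have hb : ‖∮ z in C((0:ℂ), ρ), f (jouk z) * z ^ (-(j:ℤ)-1)‖
      ≤ 2 * π * ρ * (M * ρ ^ (-(j:ℤ)-1)) := by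
    apply circleIntegral.norm_integral_le_of_norm_le_const (le_of_lt hρ0)
    intro z hz
    have hzab : ‖z‖ = ρ := by
      rw [mem_sphere_iff_norm, sub_zero] at hz
      exact hz
    have hzn : ‖z‖ = ρ := by rw [hzab]
    rw [norm_mul, norm_zpow, hzn]
    exact mul_le_mul_of_nonneg_right (hM _ (jouk_mem_ellipse hρ0 hzab))
      (zpow_nonneg (le_of_lt hρ0) _)
  -- conclude
  have hnorm : ‖Complex.I * ((π * a j : ℝ) : ℂ)‖ = π * |a j| := by
    rw [norm_mul, Complex.norm_I, one_mul, Complex.norm_real, Real.norm_eq_abs,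
      abs_mul, _root_.abs_of_nonneg Real.pi_pos.le]
  have hmain : π * |a j| ≤ 2 * π * ρ * (M * ρ ^ (-(j:ℤ)-1)) := by
    rw [← hnorm, ← hcirc1, ← heq]
    exact hb
  have hρpow : ρ * ρ ^ (-(j:ℤ)-1) = ρ⁻¹ ^ j := by
    have h0 : ρ ≠ 0 := ne_of_gt hρ0
    have h1 : ρ * ρ ^ (-(j:ℤ)-1) = ρ ^ ((1:ℤ) + (-(j:ℤ)-1)) := by
      rw [zpow_add₀ h0, zpow_one]
    rw [h1, show (1:ℤ) + (-(j:ℤ)-1) = -(j:ℤ) by ring, zpow_neg, zpow_natCast, ← inv_pow]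
  have : π * |a j| ≤ π * (2 * M * ρ⁻¹ ^ j) := by
    calc π * |a j| ≤ 2 * π * ρ * (M * ρ ^ (-(j:ℤ)-1)) := hmain
      _ = π * (2 * M * (ρ * ρ ^ (-(j:ℤ)-1))) := by ring
      _ = π * (2 * M * ρ⁻¹ ^ j) := by rw [hρpow]
  exact le_of_mul_le_mul_left this Real.pi_pos


end Aux

/-- If `f` is analytic in the region bounded by the Bernstein ellipse `E_ρ` (for `ρ > 1`),
bounded by `M` on `E_ρ`, and has Chebyshev expansion `f(x) = Σ_{j} a_j T_j(x)` on `[−1,1]`,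
then the degree-`n` Chebyshev truncation satisfies
`max_{x∈[−1,1]} |p_n(x) − f(x)| ≤ 2M ρ^{−n}/(ρ − 1)`. -/
theorem chebyshev_truncation_bound (ρ M : ℝ) (hρ : 1 < ρ) (f : ℂ → ℂ) (a : ℕ → ℝ)
    (hf : DifferentiableOn ℂ f (bernsteinRegion ρ))
    (hM : ∀ z ∈ bernsteinEllipse ρ, ‖f z‖ ≤ M)
    (hexp : ∀ x ∈ Set.Icc (-1 : ℝ) 1,
      HasSum (fun j : ℕ => ((a j * (Polynomial.Chebyshev.T ℝ (j : ℤ)).eval x : ℝ) : ℂ)) (f x))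
    (n : ℕ) :
    ∀ x ∈ Set.Icc (-1 : ℝ) 1,
      ‖((∑ j ∈ Finset.range (n + 1),
          a j * (Polynomial.Chebyshev.T ℝ (j : ℤ)).eval x : ℝ) : ℂ) - f x‖ ≤
        2 * M * ρ ^ (-(n : ℤ)) / (ρ - 1) := by
  intro x hx
  have hρ0 : (0:ℝ) < ρ := by linarith
  have hρinv : ρ⁻¹ < 1 := by
    rw [inv_lt_one_iff₀]; right; exact hρ
  have hρinv0 : (0:ℝ) ≤ ρ⁻¹ := by positivity
  have hM0 : (0:ℝ) ≤ M := le_trans (norm_nonneg _) (hM _ ⟨(0:ℝ), rfl⟩)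
  have hsum := hexp x hx
  set t : ℕ → ℂ := fun k => ((a k * (Polynomial.Chebyshev.T ℝ (k : ℤ)).eval x : ℝ) : ℂ) with ht
  have hsummable : Summable t := hsum.summable
  have hsplit := Summable.sum_add_tsum_nat_add (n+1) hsummable
  rw [hsum.tsum_eq] at hsplit
  have hcast : ((∑ j ∈ Finset.range (n+1),
      a j * (Polynomial.Chebyshev.T ℝ (j : ℤ)).eval x : ℝ) : ℂ)
      = ∑ j ∈ Finset.range (n+1), t j := by
    rw [ht]; push_cast; rfl
  rw [hcast]
  have hneg : (∑ j ∈ Finset.range (n+1), t j) - f x = -∑' k, t (k + (n+1)) := by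
    rw [← hsplit]; ring
  rw [hneg, norm_neg]
  -- summability of shifted norms
  have hsummable2 : Summable fun k => t (k + (n+1)) :=
    (summable_nat_add_iff (n+1)).mpr hsummable
  have hsummable3 : Summable fun k => ‖t (k + (n+1))‖ := summable_norm_iff.mpr hsummable2
  have hbound : ∀ k : ℕ, ‖t (k + (n+1))‖ ≤ 2*M*ρ⁻¹^(k+(n+1)) := by
    intro k
    have h1 : ‖t (k+(n+1))‖
        = |a (k+(n+1))| * |(Polynomial.Chebyshev.T ℝ ((k+(n+1) : ℕ) : ℤ)).eval x| := by
      rw [ht, Complex.norm_real, Real.norm_eq_abs, abs_mul]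
    rw [h1]
    calc |a (k+(n+1))| * |(Polynomial.Chebyshev.T ℝ ((k+(n+1) : ℕ) : ℤ)).eval x|
        ≤ |a (k+(n+1))| * 1 :=
          mul_le_mul_of_nonneg_left (T_abs_le hx _) (abs_nonneg _)
      _ = |a (k+(n+1))| := mul_one _
      _ ≤ 2*M*ρ⁻¹^(k+(n+1)) :=
          coeff_bound ρ M hρ f a hf hM hexp _ (by omega)
  have hgeom : Summable fun k : ℕ => 2*M*ρ⁻¹^(k+(n+1)) := by
    apply Summable.mul_left
    exact ((summable_geometric_of_lt_one hρinv0 hρinv).comp_injective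
      (add_left_injective (n+1)))
  calc ‖∑' k, t (k + (n+1))‖ ≤ ∑' k, ‖t (k + (n+1))‖ := norm_tsum_le_tsum_norm hsummable3
    _ ≤ ∑' k, 2*M*ρ⁻¹^(k+(n+1)) := Summable.tsum_le_tsum hbound hsummable3 hgeom
    _ = 2*M*ρ⁻¹^(n+1) * (1 - ρ⁻¹)⁻¹ := by
        have : ∀ k : ℕ, 2*M*ρ⁻¹^(k+(n+1)) = (2*M*ρ⁻¹^(n+1)) * ρ⁻¹^k := by
          intro k; rw [pow_add]; ring
        rw [tsum_congr this, tsum_mul_left, tsum_geometric_of_lt_one hρinv0 hρinv]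
    _ = 2 * M * ρ ^ (-(n : ℤ)) / (ρ - 1) := by
        rw [zpow_neg, zpow_natCast]
        have h1 : ρ - 1 ≠ 0 := by linarith
        have h2 : (1 : ℝ) - ρ⁻¹ ≠ 0 := by
          intro h; apply h1; field_simp at h; linarith
        field_simp
        have h3 : ρ ≠ 0 := ne_of_gt hρ0
        rw [one_div, inv_pow]; field_simp
        ring
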